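/- arXiv:1406.7852 — 6 statements merged into one kernel-verified Lean document; each statement's English description precedes it below -/
import Mathlib

section
/- Let c1 > 0, Θ > 0, c2 ∈ ℝ, α = c2/Θ, ρ* > 0 and 0 < R1 < R2. On the annulus D = {x ∈ ℝ² : R1 < |x| < R2} define ρ(x) = ρ* |x|^α and Ω(x) = (x₂, −x₁)/|x|. Then for every x ∈ D: (i) |Ω(x)| = 1; (ii) ∂₁(ρΩ₁)(x) + ∂₂(ρΩ₂)(x) = 0; (iii) c2 ρ(x) ((Ω·∇)Ω)(x) + Θ (∇ρ(x) − (Ω(x)·∇ρ(x)) Ω(x)) = 0, where ((Ω·∇)Ω)_j = Ω₁ ∂₁Ω_j + Ω₂ ∂₂Ω_j for j = 1,2. Moreover Ω(x)·x = 0, so Ω is tangent to the boundary circles |x| = R1 and |x| = R2. -/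
open Real Set

/-- partial derivative in the first coordinate of a function on `ℝ²`. -/
noncomputable def pd1 (f : ℝ × ℝ → ℝ) (p : ℝ × ℝ) : ℝ := deriv (fun s => f (s, p.2)) p.1

/-- partial derivative in the second coordinate of a function on `ℝ²`. -/
noncomputable def pd2 (f : ℝ × ℝ → ℝ) (p : ℝ × ℝ) : ℝ := deriv (fun s => f (p.1, s)) p.2

set_option maxHeartbeats 1000000 in
/-- the pair `ρ(x) = ρ* |x|^α`, `Ω(x) = (x₂,−x₁)/|x|` is a perfectly
polarized steady state of the SOH model on the annulus `R1 < |x| < R2`, tangent to the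
boundary circles. -/
theorem stmt_1 (c1 c2 Θ α ρstar R1 R2 : ℝ)
    (hc1 : 0 < c1) (hΘ : 0 < Θ) (hα : α = c2 / Θ) (hρstar : 0 < ρstar)
    (hR1 : 0 < R1) (hR12 : R1 < R2)
    (nrm : ℝ × ℝ → ℝ) (hnrm : ∀ x, nrm x = Real.sqrt (x.1 ^ 2 + x.2 ^ 2))
    (ρ : ℝ × ℝ → ℝ) (hρ : ∀ x, ρ x = ρstar * nrm x ^ α)
    (Ω1 Ω2 : ℝ × ℝ → ℝ)
    (hΩ1 : ∀ x, Ω1 x = x.2 / nrm x) (hΩ2 : ∀ x, Ω2 x = -x.1 / nrm x) :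
    ∀ x : ℝ × ℝ, R1 < nrm x → nrm x < R2 →
      -- (i) |Ω(x)| = 1
      (Ω1 x ^ 2 + Ω2 x ^ 2 = 1) ∧
      -- (ii) ∇·(ρΩ) = 0
      (pd1 (fun y => ρ y * Ω1 y) x + pd2 (fun y => ρ y * Ω2 y) x = 0) ∧
      -- (iii) j = 1 component of c2 ρ (Ω·∇)Ω + Θ (∇ρ − (Ω·∇ρ)Ω) = 0
      (c2 * ρ x * (Ω1 x * pd1 Ω1 x + Ω2 x * pd2 Ω1 x) +
        Θ * (pd1 ρ x - (Ω1 x * pd1 ρ x + Ω2 x * pd2 ρ x) * Ω1 x) = 0) ∧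
      -- (iii) j = 2 component
      (c2 * ρ x * (Ω1 x * pd1 Ω2 x + Ω2 x * pd2 Ω2 x) +
        Θ * (pd2 ρ x - (Ω1 x * pd1 ρ x + Ω2 x * pd2 ρ x) * Ω2 x) = 0) ∧
      -- Ω is tangent to the circles |x| = const
      (Ω1 x * x.1 + Ω2 x * x.2 = 0) := by
  rintro ⟨a, b⟩ hx1 hx2
  have hnx : nrm (a, b) = Real.sqrt (a ^ 2 + b ^ 2) := hnrm _
  have hr : (0:ℝ) < Real.sqrt (a ^ 2 + b ^ 2) := lt_trans hR1 (hnx ▸ hx1)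
  set r := Real.sqrt (a ^ 2 + b ^ 2) with hrdef
  have hr0 : r ≠ 0 := hr.ne'
  have hab : 0 < a ^ 2 + b ^ 2 := Real.sqrt_pos.mp hr
  have hr2 : r ^ 2 = a ^ 2 + b ^ 2 := Real.sq_sqrt hab.le
  set A := r ^ α with hA
  have hApos : 0 < A := Real.rpow_pos_of_pos hr α
  have hsub : r ^ (α - 1) = A / r := by
    rw [hA, Real.rpow_sub hr, Real.rpow_one]
  have hc2 : c2 = Θ * α := by
    rw [hα]; field_simp
  -- derivative of the norm
  have hN1 : HasDerivAt (fun s => Real.sqrt (s ^ 2 + b ^ 2)) (a / r) a := by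
    have hg : HasDerivAt (fun s : ℝ => s ^ 2 + b ^ 2) (2 * a) a := by
      simpa using (hasDerivAt_pow 2 a).add_const (b ^ 2)
    have h := hg.sqrt hab.ne'
    convert h using 1
    simp only [← hrdef]
    field_simp
  have hN2 : HasDerivAt (fun t => Real.sqrt (a ^ 2 + t ^ 2)) (b / r) b := by
    have hg : HasDerivAt (fun t : ℝ => a ^ 2 + t ^ 2) (2 * b) b := by
      simpa using (hasDerivAt_pow 2 b).const_add (a ^ 2)
    have h := hg.sqrt hab.ne'
    convert h using 1
    simp only [← hrdef]
    field_simp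
  -- values at the point
  have hρv : ρ (a, b) = ρstar * A := by rw [hρ, hnx, ← hA]
  have hΩ1v : Ω1 (a, b) = b / r := by rw [hΩ1, hnx]
  have hΩ2v : Ω2 (a, b) = -a / r := by rw [hΩ2, hnx]
  -- partial derivatives
  have hρ1 : HasDerivAt (fun s => ρ (s, b)) (ρstar * α * A * a / r ^ 2) a := by
    have h0 : (fun s => ρ (s, b)) = fun s => ρstar * Real.sqrt (s ^ 2 + b ^ 2) ^ α := by
      funext s; rw [hρ, hnrm]
    rw [h0]
    have h := (hN1.rpow_const (p := α) (Or.inl hr0)).const_mul ρstar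
    refine h.congr_deriv (Eq.symm ?_)
    simp only [← hrdef]
    rw [hsub]
    field_simp
  have hρ2 : HasDerivAt (fun t => ρ (a, t)) (ρstar * α * A * b / r ^ 2) b := by
    have h0 : (fun t => ρ (a, t)) = fun t => ρstar * Real.sqrt (a ^ 2 + t ^ 2) ^ α := by
      funext t; rw [hρ, hnrm]
    rw [h0]
    have h := (hN2.rpow_const (p := α) (Or.inl hr0)).const_mul ρstar
    refine h.congr_deriv (Eq.symm ?_)
    simp only [← hrdef]
    rw [hsub]
    field_simp
  have hΩ1a : HasDerivAt (fun s => Ω1 (s, b)) (-(a * b) / (r ^ 2 * r)) a := by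
    have h0 : (fun s => Ω1 (s, b)) = fun s => b / Real.sqrt (s ^ 2 + b ^ 2) := by
      funext s; rw [hΩ1, hnrm]
    rw [h0]
    have h := (hasDerivAt_const a b).div hN1 hr0
    refine h.congr_deriv (Eq.symm ?_)
    simp only [← hrdef]
    field_simp
    ring
  have hΩ1b : HasDerivAt (fun t => Ω1 (a, t)) ((r ^ 2 - b ^ 2) / (r ^ 2 * r)) b := by
    have h0 : (fun t => Ω1 (a, t)) = fun t => t / Real.sqrt (a ^ 2 + t ^ 2) := by
      funext t; rw [hΩ1, hnrm]
    rw [h0]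
    have h := (hasDerivAt_id b).div hN2 hr0
    refine h.congr_deriv (Eq.symm ?_)
    simp only [← hrdef, id, Pi.neg_apply]
    field_simp
  have hΩ2a : HasDerivAt (fun s => Ω2 (s, b)) (-(r ^ 2 - a ^ 2) / (r ^ 2 * r)) a := by
    have h0 : (fun s => Ω2 (s, b)) = fun s => -s / Real.sqrt (s ^ 2 + b ^ 2) := by
      funext s; rw [hΩ2, hnrm]
    rw [h0]
    have h := ((hasDerivAt_id a).neg).div hN1 hr0
    refine h.congr_deriv (Eq.symm ?_)
    simp only [← hrdef, id, Pi.neg_apply]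
    field_simp
    ring
  have hΩ2b : HasDerivAt (fun t => Ω2 (a, t)) (a * b / (r ^ 2 * r)) b := by
    have h0 : (fun t => Ω2 (a, t)) = fun t => -a / Real.sqrt (a ^ 2 + t ^ 2) := by
      funext t; rw [hΩ2, hnrm]
    rw [h0]
    have h := (hasDerivAt_const b (-a)).div hN2 hr0
    refine h.congr_deriv (Eq.symm ?_)
    simp only [← hrdef]
    rw [div_eq_div_iff (by positivity) (by positivity)]
    field_simp
    ring
  have hf1 : HasDerivAt (fun s => ρ (s, b) * Ω1 (s, b)) _ a := hρ1.mul hΩ1a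
  have hf2 : HasDerivAt (fun t => ρ (a, t) * Ω2 (a, t)) _ b := hρ2.mul hΩ2b
  refine ⟨?_, ?_, ?_, ?_, ?_⟩
  · rw [hΩ1v, hΩ2v]
    field_simp
    linarith [hr2]
  · simp only [pd1, pd2]
    rw [hf1.deriv, hf2.deriv, hρv, hΩ1v, hΩ2v]
    field_simp
    ring
  · simp only [pd1, pd2]
    rw [hΩ1a.deriv, hΩ1b.deriv, hρ1.deriv, hρ2.deriv, hρv, hΩ1v, hΩ2v, hc2]
    field_simp
    ring
  · simp only [pd1, pd2]
    rw [hΩ2a.deriv, hΩ2b.deriv, hρ1.deriv, hρ2.deriv, hρv, hΩ1v, hΩ2v, hc2]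
    field_simp
    ring
  · rw [hΩ1v, hΩ2v]
    field_simp
    ring
end

section
/- Let c1 > 0, Θ > 0, c2 ∈ ℝ, α = c2/Θ, ρ* > 0, ρ_s(r) = ρ* r^α, and 0 < R1 < R2. Let ρ̃, φ̃ : [R1,R2] × ℝ × ℝ → ℝ be continuously differentiable functions of (r,θ,t). For ε ∈ ℝ set ρ^ε = ρ_s(r) + ε ρ̃(r,θ,t) and φ^ε = −π/2 + ε φ̃(r,θ,t), and define F₁(ε) = ∂_t ρ^ε + (c1/r)[∂_r(r ρ^ε cos φ^ε) + ∂_θ(ρ^ε sin φ^ε)] and F₂(ε) = ∂_t φ^ε + c2(cos φ^ε ∂_r φ^ε + (sin φ^ε / r) ∂_θ φ^ε + sin φ^ε / r) + (Θ/ρ^ε)((cos φ^ε / r) ∂_θ ρ^ε − sin φ^ε ∂_r ρ^ε). Then at every point (r,θ,t) ∈ (R1,R2) × ℝ × ℝ: F₁(0) = 0, F₂(0) = 0, the maps ε ↦ F₁(ε) and ε ↦ F₂(ε) are differentiable at ε = 0, and (d/dε)F₁(ε)|_{ε=0} = ∂_t ρ̃ + c1 ρ_s(r) ∂_r φ̃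 − (c1/r) ∂_θ ρ̃ + (c1/r)(1+α) ρ_s(r) φ̃, (d/dε)F₂(ε)|_{ε=0} = ∂_t φ̃ + (c2/(α ρ_s(r))) ∂_r ρ̃ − (c2/r) ∂_θ φ̃ − (c2/(r ρ_s(r))) ρ̃. -/
open Real Set

/-- the operator `L` of the paper is the linearization of the SOH system
in polar coordinates about the perfectly polarized steady state `(ρ_s, −π/2)`,
`ρ_s(r) = ρ* r^α`, `α = c2/Θ`. -/
theorem stmt_2 (c1 c2 Θ α ρstar R1 R2 : ℝ)
    (hc1 : 0 < c1) (hΘ : 0 < Θ) (hc2 : c2 ≠ 0) (hα : α = c2 / Θ)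
    (hρstar : 0 < ρstar) (hR1 : 0 < R1) (hR12 : R1 < R2)
    (ρt φt : ℝ → ℝ → ℝ → ℝ)
    (hρt : ContDiff ℝ 1 (fun p : ℝ × ℝ × ℝ => ρt p.1 p.2.1 p.2.2))
    (hφt : ContDiff ℝ 1 (fun p : ℝ × ℝ × ℝ => φt p.1 p.2.1 p.2.2)) :
    ∀ r ∈ Set.Ioo R1 R2, ∀ θ t : ℝ,
      let ρs : ℝ → ℝ := fun s => ρstar * s ^ α
      let F1 : ℝ → ℝ := fun ε =>
        deriv (fun s => ρs r + ε * ρt r θ s) t +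
          (c1 / r) *
            (deriv (fun s => s * (ρs s + ε * ρt s θ t) * Real.cos (-(π/2) + ε * φt s θ t)) r +
             deriv (fun s => (ρs r + ε * ρt r s t) * Real.sin (-(π/2) + ε * φt r s t)) θ)
      let F2 : ℝ → ℝ := fun ε =>
        deriv (fun s => -(π/2) + ε * φt r θ s) t +
          c2 * (Real.cos (-(π/2) + ε * φt r θ t) * deriv (fun s => -(π/2) + ε * φt s θ t) r +
                (Real.sin (-(π/2) + ε * φt r θ t) / r) * deriv (fun s => -(π/2) + ε * φt r s t) θ +
                Real.sin (-(π/2) + ε * φt r θ t) / r) +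
          (Θ / (ρs r + ε * ρt r θ t)) *
            ((Real.cos (-(π/2) + ε * φt r θ t) / r) * deriv (fun s => ρs r + ε * ρt r s t) θ -
             Real.sin (-(π/2) + ε * φt r θ t) * deriv (fun s => ρs s + ε * ρt s θ t) r)
      F1 0 = 0 ∧ F2 0 = 0 ∧
      HasDerivAt F1
        (deriv (fun s => ρt r θ s) t + c1 * ρs r * deriv (fun s => φt s θ t) r -
          (c1 / r) * deriv (fun s => ρt r s t) θ + (c1 / r) * (1 + α) * ρs r * φt r θ t) 0 ∧
      HasDerivAt F2
        (deriv (fun s => φt r θ s) t + (c2 / (α * ρs r)) * deriv (fun s => ρt s θ t) r -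
          (c2 / r) * deriv (fun s => φt r s t) θ - (c2 / (r * ρs r)) * ρt r θ t) 0 := by
  intro r hr θ t
  intro ρs F1 F2
  have hrpos : 0 < r := lt_trans hR1 hr.1
  have hrne : r ≠ 0 := ne_of_gt hrpos
  have hΘne : Θ ≠ 0 := ne_of_gt hΘ
  have hρstarne : ρstar ≠ 0 := ne_of_gt hρstar
  have hrαne : r ^ α ≠ 0 := (Real.rpow_pos_of_pos hrpos α).ne'
  have hρsrne : ρstar * r ^ α ≠ 0 := mul_ne_zero hρstarne hrαne
  have hαne : α ≠ 0 := by rw [hα]; exact div_ne_zero hc2 hΘne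
  have hc2α : c2 = α * Θ := by rw [hα]; field_simp
  have hpow1 : r ^ (α - 1) = r ^ α / r := by
    rw [Real.rpow_sub hrpos, Real.rpow_one]
  -- joint differentiability and slice derivatives
  have Hρ : Differentiable ℝ (fun p : ℝ × ℝ × ℝ => ρt p.1 p.2.1 p.2.2) :=
    hρt.differentiable one_ne_zero
  have Hφ : Differentiable ℝ (fun p : ℝ × ℝ × ℝ => φt p.1 p.2.1 p.2.2) :=
    hφt.differentiable one_ne_zero
  have curveR : Differentiable ℝ (fun s : ℝ => ((s, θ, t) : ℝ × ℝ × ℝ)) := by fun_prop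
  have curveΘ : Differentiable ℝ (fun s : ℝ => ((r, s, t) : ℝ × ℝ × ℝ)) := by fun_prop
  have curveT : Differentiable ℝ (fun s : ℝ => ((r, θ, s) : ℝ × ℝ × ℝ)) := by fun_prop
  have hρr : HasDerivAt (fun s => ρt s θ t) (deriv (fun s => ρt s θ t) r) r :=
    ((Hρ.comp curveR) r).hasDerivAt
  have hρθ : HasDerivAt (fun s => ρt r s t) (deriv (fun s => ρt r s t) θ) θ :=
    ((Hρ.comp curveΘ) θ).hasDerivAt
  have hρT : HasDerivAt (fun s => ρt r θ s) (deriv (fun s => ρt r θ s) t) t :=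
    ((Hρ.comp curveT) t).hasDerivAt
  have hφr : HasDerivAt (fun s => φt s θ t) (deriv (fun s => φt s θ t) r) r :=
    ((Hφ.comp curveR) r).hasDerivAt
  have hφθ : HasDerivAt (fun s => φt r s t) (deriv (fun s => φt r s t) θ) θ :=
    ((Hφ.comp curveΘ) θ).hasDerivAt
  have hφT : HasDerivAt (fun s => φt r θ s) (deriv (fun s => φt r θ s) t) t :=
    ((Hφ.comp curveT) t).hasDerivAt
  have hpow : HasDerivAt (fun s : ℝ => s ^ α) (α * r ^ (α - 1)) r :=
    Real.hasDerivAt_rpow_const (Or.inl hrne)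
  -- the inner derivatives, computed for each ε
  have I1 : ∀ ε : ℝ, deriv (fun s => ρstar * r ^ α + ε * ρt r θ s) t
      = ε * deriv (fun s => ρt r θ s) t :=
    fun ε => ((hρT.const_mul ε).const_add (ρstar * r ^ α)).deriv
  have I2 : ∀ ε : ℝ,
      deriv (fun s => s * (ρstar * s ^ α + ε * ρt s θ t) * Real.cos (-(π/2) + ε * φt s θ t)) r
      = (1 * (ρstar * r ^ α + ε * ρt r θ t)
          + r * (ρstar * (α * r ^ (α - 1)) + ε * deriv (fun s => ρt s θ t) r))
            * Real.cos (-(π/2) + ε * φt r θ t)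
        + r * (ρstar * r ^ α + ε * ρt r θ t)
            * (-Real.sin (-(π/2) + ε * φt r θ t) * (ε * deriv (fun s => φt s θ t) r)) :=
    fun ε => (((hasDerivAt_id r).mul ((hpow.const_mul ρstar).add (hρr.const_mul ε))).mul
      (((hφr.const_mul ε).const_add (-(π/2))).cos)).deriv
  have I3 : ∀ ε : ℝ,
      deriv (fun s => (ρstar * r ^ α + ε * ρt r s t) * Real.sin (-(π/2) + ε * φt r s t)) θ
      = (ε * deriv (fun s => ρt r s t) θ) * Real.sin (-(π/2) + ε * φt r θ t)
        + (ρstar * r ^ α + ε * ρt r θ t)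
            * (Real.cos (-(π/2) + ε * φt r θ t) * (ε * deriv (fun s => φt r s t) θ)) :=
    fun ε => (((hρθ.const_mul ε).const_add (ρstar * r ^ α)).mul
      (((hφθ.const_mul ε).const_add (-(π/2))).sin)).deriv
  have I4 : ∀ ε : ℝ, deriv (fun s => -(π/2) + ε * φt r θ s) t
      = ε * deriv (fun s => φt r θ s) t :=
    fun ε => ((hφT.const_mul ε).const_add (-(π/2))).deriv
  have I5 : ∀ ε : ℝ, deriv (fun s => -(π/2) + ε * φt s θ t) r
      = ε * deriv (fun s => φt s θ t) r :=
    fun ε => ((hφr.const_mul ε).const_add (-(π/2))).deriv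
  have I6 : ∀ ε : ℝ, deriv (fun s => -(π/2) + ε * φt r s t) θ
      = ε * deriv (fun s => φt r s t) θ :=
    fun ε => ((hφθ.const_mul ε).const_add (-(π/2))).deriv
  have I7 : ∀ ε : ℝ, deriv (fun s => ρstar * r ^ α + ε * ρt r s t) θ
      = ε * deriv (fun s => ρt r s t) θ :=
    fun ε => ((hρθ.const_mul ε).const_add (ρstar * r ^ α)).deriv
  have I8 : ∀ ε : ℝ, deriv (fun s => ρstar * s ^ α + ε * ρt s θ t) r
      = ρstar * (α * r ^ (α - 1)) + ε * deriv (fun s => ρt s θ t) r :=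
    fun ε => ((hpow.const_mul ρstar).add (hρr.const_mul ε)).deriv
  -- derivative-in-ε building blocks
  have hlin : ∀ c : ℝ, HasDerivAt (fun ε : ℝ => ε * c) c 0 :=
    fun c => by simpa using (hasDerivAt_id (0:ℝ)).mul_const c
  have haff : ∀ a c : ℝ, HasDerivAt (fun ε : ℝ => a + ε * c) c 0 :=
    fun a c => (hlin c).const_add a
  have hcosd : HasDerivAt (fun ε : ℝ => Real.cos (-(π/2) + ε * φt r θ t)) (φt r θ t) 0 := by
    have h := (haff (-(π/2)) (φt r θ t)).cos
    simpa using h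
  have hsind : HasDerivAt (fun ε : ℝ => Real.sin (-(π/2) + ε * φt r θ t)) 0 0 := by
    have h := (haff (-(π/2)) (φt r θ t)).sin
    simpa using h
  refine ⟨?_, ?_, ?_, ?_⟩
  · -- F1 0 = 0
    simp only [F1, ρs]
    rw [I1 0, I2 0, I3 0]
    simp [Real.cos_pi_div_two, Real.sin_pi_div_two]
  · -- F2 0 = 0
    simp only [F2, ρs]
    rw [I4 0, I5 0, I6 0, I7 0, I8 0, hpow1, hc2α]
    simp [Real.cos_pi_div_two, Real.sin_pi_div_two]
    field_simp
    ring
  · -- linearization of F1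
    simp only [F1, ρs]
    have comb1 := (hlin (deriv (fun s => ρt r θ s) t)).add
      (((((((haff (ρstar * r ^ α) (ρt r θ t)).add
            ((haff (ρstar * (α * r ^ (α - 1))) (deriv (fun s => ρt s θ t) r)).const_mul r)).mul
              hcosd).sub
          ((((haff (ρstar * r ^ α) (ρt r θ t)).const_mul r).mul hsind).mul
            (hlin (deriv (fun s => φt s θ t) r)))).add
          ((hlin (deriv (fun s => ρt r s t) θ)).mul hsind)).add
          (((haff (ρstar * r ^ α) (ρt r θ t)).mul hcosd).mul
            (hlin (deriv (fun s => φt r s t) θ)))).const_mul (c1 / r))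
    refine (comb1.congr_deriv ?_).congr_of_eventuallyEq
      (Filter.Eventually.of_forall fun ε => ?_)
    · rw [hpow1]
      simp [Real.cos_pi_div_two, Real.sin_pi_div_two]
      field_simp
      ring
    · dsimp only
      rw [I1 ε, I2 ε, I3 ε]
      simp only [Pi.add_apply, Pi.mul_apply, Pi.sub_apply, Pi.div_apply]
      ring
  · -- linearization of F2
    simp only [F2, ρs]
    have comb2 := ((hlin (deriv (fun s => φt r θ s) t)).add
        ((((hcosd.mul (hlin (deriv (fun s => φt s θ t) r))).add
            ((hsind.div_const r).mul (hlin (deriv (fun s => φt r s t) θ)))).add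
          (hsind.div_const r)).const_mul c2)).add
      (((hasDerivAt_const (0:ℝ) Θ).div (haff (ρstar * r ^ α) (ρt r θ t))
          (by simpa using hρsrne)).mul
        (((hcosd.div_const r).mul (hlin (deriv (fun s => ρt r s t) θ))).sub
          (hsind.mul (haff (ρstar * (α * r ^ (α - 1))) (deriv (fun s => ρt s θ t) r)))))
    refine (comb2.congr_deriv ?_).congr_of_eventuallyEq
      (Filter.Eventually.of_forall fun ε => ?_)
    · rw [hpow1, hc2α]
      simp [Real.cos_pi_div_two, Real.sin_pi_div_two]
      field_simp
      ring
    · dsimp only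
      rw [I4 ε, I5 ε, I6 ε, I7 ε, I8 ε]
      simp only [Pi.add_apply, Pi.mul_apply, Pi.sub_apply, Pi.div_apply]
end

section
/- Let c1 > 0, Θ > 0, c2 ∈ ℝ with c2 ≠ 0, α = c2/Θ, 0 < R1 < R2, n ∈ ℤ and λ ∈ ℂ. Suppose ρ, φ : [R1,R2] → ℂ are continuously differentiable, satisfy the transformed first-order system (T1)–(T2) for all r ∈ [R1,R2], and satisfy the boundary conditions φ(R1) = φ(R2) = 0. If (ρ, φ) is not identically zero on [R1,R2], then Re λ = 0. -/
open Real Set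

/-- The transformed first-order system (T1)–(T2) of the paper with eigenvalue `lam`, for
complex-valued functions `ρ, φ` on `[R1,R2]`. -/
def TransSystem (c1 c2 α R1 R2 : ℝ) (n : ℤ) (lam : ℂ) (ρ φ : ℝ → ℂ) : Prop :=
  ∀ r ∈ Set.Icc R1 R2,
    -- (T1)
    (deriv ρ r + ((α / r ^ (α + 1) : ℝ) : ℂ) *
        (lam / (c2 : ℂ) - Complex.I * (n : ℂ) / (r : ℂ)) * φ r = 0)
    ∧ -- (T2)
    (deriv φ r + (lam / (c1 : ℂ) - Complex.I * (n : ℂ) / (r : ℂ)) *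
        ((r ^ (α + 1) : ℝ) : ℂ) * ρ r = 0)

/-- Lemma 2 of the paper: any nontrivial solution of the transformed
system (T1)–(T2) with `φ(R1) = φ(R2) = 0` forces the eigenvalue to be pure imaginary. -/
theorem stmt_5 (c1 c2 Θ α R1 R2 : ℝ) (n : ℤ) (lam : ℂ)
    (hc1 : 0 < c1) (hΘ : 0 < Θ) (hc2 : c2 ≠ 0) (hα : α = c2 / Θ)
    (hR1 : 0 < R1) (hR12 : R1 < R2)
    (ρ φ : ℝ → ℂ)
    (hρ : ContDiffOn ℝ 1 ρ (Set.Icc R1 R2)) (hφ : ContDiffOn ℝ 1 φ (Set.Icc R1 R2))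
    (hsys : TransSystem c1 c2 α R1 R2 n lam ρ φ)
    (hbc1 : φ R1 = 0) (hbc2 : φ R2 = 0)
    (hnz : ¬ ∀ r ∈ Set.Icc R1 R2, ρ r = 0 ∧ φ r = 0) :
    lam.re = 0 := by
  by_contra hre
  have hR12' : R1 ≤ R2 := hR12.le
  have hxpos : ∀ x ∈ Set.Icc R1 R2, (0:ℝ) < x := fun x hx => lt_of_lt_of_le hR1 hx.1
  have hxne : ∀ x ∈ Set.Icc R1 R2, (x:ℝ) ≠ 0 := fun x hx => ne_of_gt (hxpos x hx)
  have hrpow_pos : ∀ x ∈ Set.Icc R1 R2, (0:ℝ) < x ^ (α+1) :=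
    fun x hx => Real.rpow_pos_of_pos (hxpos x hx) _
  -- coefficient functions
  set A : ℝ → ℂ := fun x => ((α / x ^ (α + 1) : ℝ) : ℂ) *
      (lam / (c2 : ℂ) - Complex.I * (n : ℂ) / (x : ℂ)) with hAdef
  set B : ℝ → ℂ := fun x => (lam / (c1 : ℂ) - Complex.I * (n : ℂ) / (x : ℂ)) *
      ((x ^ (α + 1) : ℝ) : ℂ) with hBdef
  have hdρ : ∀ x ∈ Set.Icc R1 R2, deriv ρ x = -(A x * φ x) := by
    intro x hx
    have := (hsys x hx).1
    simp only [hAdef]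
    linear_combination this
  have hdφ : ∀ x ∈ Set.Icc R1 R2, deriv φ x = -(B x * ρ x) := by
    intro x hx
    have := (hsys x hx).2
    simp only [hBdef]
    linear_combination this
  -- differentiability at interior points
  have hρd : ∀ x ∈ Set.Ioo R1 R2, HasDerivAt ρ (deriv ρ x) x := by
    intro x hx
    exact (((hρ.differentiableOn one_ne_zero) x (Ioo_subset_Icc_self hx)).differentiableAt
      (Icc_mem_nhds hx.1 hx.2)).hasDerivAt
  have hφd : ∀ x ∈ Set.Ioo R1 R2, HasDerivAt φ (deriv φ x) x := by
    intro x hx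
    exact (((hφ.differentiableOn one_ne_zero) x (Ioo_subset_Icc_self hx)).differentiableAt
      (Icc_mem_nhds hx.1 hx.2)).hasDerivAt
  -- the function whose derivative we integrate
  set f : ℝ → ℂ := fun x => (starRingEnd ℂ) (ρ x) * φ x with hfdef
  set F : ℝ → ℂ := fun x =>
    -((starRingEnd ℂ) (A x) * ((Complex.normSq (φ x) : ℝ) : ℂ))
      - B x * ((Complex.normSq (ρ x) : ℝ) : ℂ) with hFdef
  have hfd : ∀ x ∈ Set.Ioo R1 R2, HasDerivAt f (F x) x := by
    intro x hx
    have h1 := ((hρd x hx).star).mul (hφd x hx)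
    have e1 : (starRingEnd ℂ) (φ x) * φ x = ((Complex.normSq (φ x) : ℝ) : ℂ) := by
      rw [mul_comm, Complex.mul_conj]
    have e2 : (starRingEnd ℂ) (ρ x) * ρ x = ((Complex.normSq (ρ x) : ℝ) : ℂ) := by
      rw [mul_comm, Complex.mul_conj]
    have hx' := Ioo_subset_Icc_self hx
    have : F x = star (deriv ρ x) * φ x + (starRingEnd ℂ) (ρ x) * deriv φ x := by
      rw [hdρ x hx', hdφ x hx']
      simp only [hFdef, star_neg, star_mul', Complex.star_def, map_mul]
      linear_combination (starRingEnd ℂ) (A x) * e1 + B x * e2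
    rw [this]
    exact h1
  -- continuity facts
  have hrpow_cont : ContinuousOn (fun x : ℝ => x ^ (α + 1)) (Set.Icc R1 R2) := by
    apply ContinuousOn.rpow_const continuousOn_id
    intro x hx; exact Or.inl (hxne x hx)
  have hcρ : ContinuousOn ρ (Set.Icc R1 R2) := hρ.continuousOn
  have hcφ : ContinuousOn φ (Set.Icc R1 R2) := hφ.continuousOn
  have hcoe : ContinuousOn (fun x : ℝ => (x:ℂ)) (Set.Icc R1 R2) :=
    Complex.continuous_ofReal.continuousOn
  have hcoene : ∀ x ∈ Set.Icc R1 R2, (x:ℂ) ≠ 0 := by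
    intro x hx; exact_mod_cast Complex.ofReal_ne_zero.2 (hxne x hx)
  have hcA : ContinuousOn A (Set.Icc R1 R2) := by
    apply ContinuousOn.mul
    · exact Complex.continuous_ofReal.comp_continuousOn
        (continuousOn_const.div hrpow_cont (fun x hx => ne_of_gt (hrpow_pos x hx)))
    · exact continuousOn_const.sub (continuousOn_const.div hcoe hcoene)
  have hcB : ContinuousOn B (Set.Icc R1 R2) := by
    apply ContinuousOn.mul
    · exact continuousOn_const.sub (continuousOn_const.div hcoe hcoene)
    · exact Complex.continuous_ofReal.comp_continuousOn hrpow_cont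
  have hcF : ContinuousOn F (Set.Icc R1 R2) := by
    apply ContinuousOn.sub
    · apply ContinuousOn.neg
      exact (continuous_star.comp_continuousOn hcA).mul
        (Complex.continuous_ofReal.comp_continuousOn
          (Complex.continuous_normSq.comp_continuousOn hcφ))
    · exact hcB.mul (Complex.continuous_ofReal.comp_continuousOn
        (Complex.continuous_normSq.comp_continuousOn hcρ))
  have hcf : ContinuousOn f (Set.Icc R1 R2) :=
    (continuous_star.comp_continuousOn hcρ).mul hcφ
  have hFint : IntervalIntegrable F MeasureTheory.volume R1 R2 := by
    apply ContinuousOn.intervalIntegrable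
    rwa [Set.uIcc_of_le hR12']
  -- FTC
  have hFTC : ∫ x in R1..R2, F x = f R2 - f R1 :=
    intervalIntegral.integral_eq_sub_of_hasDerivAt_of_le hR12' hcf hfd hFint
  have hint0 : ∫ x in R1..R2, F x = 0 := by
    rw [hFTC]; simp [hfdef, hbc1, hbc2]
  have hre0 : ∫ x in R1..R2, (F x).re = 0 := by
    have := Complex.reCLM.intervalIntegral_comp_comm hFint (a := R1) (b := R2)
    simp only [Complex.reCLM_apply] at this
    rw [this, hint0]
    simp
  -- the real-valued density
  set h : ℝ → ℝ := fun x => α / c2 * (Complex.normSq (φ x) / x ^ (α+1))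
      + 1/c1 * (x ^ (α+1) * Complex.normSq (ρ x)) with hhdef
  have hαc2 : α / c2 = 1 / Θ := by
    rw [hα]; field_simp
  have hFre : ∀ x ∈ Set.Icc R1 R2, (F x).re = -(lam.re * h x) := by
    intro x hx
    have hx0 : x ≠ 0 := hxne x hx
    have hp0 : x ^ (α+1) ≠ 0 := ne_of_gt (hrpow_pos x hx)
    simp only [hFdef, hAdef, hBdef, hhdef, Complex.sub_re, Complex.neg_re, Complex.mul_re,
      Complex.mul_im, Complex.div_re, Complex.div_im, Complex.ofReal_re, Complex.ofReal_im,
      Complex.I_re, Complex.I_im, Complex.conj_re, Complex.conj_im, Complex.intCast_re,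
      Complex.intCast_im, Complex.normSq_ofReal, map_sub, map_mul, map_div₀,
      Complex.conj_ofReal, Complex.conj_I]
    field_simp
    ring
  have hcongr : ∫ x in R1..R2, (F x).re = ∫ x in R1..R2, -(lam.re * h x) := by
    apply intervalIntegral.integral_congr
    intro x hx
    rw [Set.uIcc_of_le hR12'] at hx
    exact hFre x hx
  have hInth : ∫ x in R1..R2, h x = 0 := by
    have h2 : -(lam.re * ∫ x in R1..R2, h x) = 0 := by
      rw [← intervalIntegral.integral_const_mul, ← intervalIntegral.integral_neg, ← hcongr, hre0]
    have := neg_eq_zero.mp h2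
    rcases mul_eq_zero.mp this with h3 | h3
    · exact absurd h3 hre
    · exact h3
  -- continuity and nonnegativity of h
  have hch : ContinuousOn h (Set.Icc R1 R2) := by
    apply ContinuousOn.add
    · exact continuousOn_const.mul ((Complex.continuous_normSq.comp_continuousOn hcφ).div
        hrpow_cont (fun x hx => ne_of_gt (hrpow_pos x hx)))
    · exact continuousOn_const.mul (hrpow_cont.mul
        (Complex.continuous_normSq.comp_continuousOn hcρ))
  have hhnonneg : ∀ x ∈ Set.Icc R1 R2, 0 ≤ h x := by
    intro x hx
    have h1 : (0:ℝ) ≤ α / c2 := by rw [hαc2]; exact le_of_lt (one_div_pos.mpr hΘ)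
    have h2 : (0:ℝ) < x ^ (α+1) := hrpow_pos x hx
    have := Complex.normSq_nonneg (φ x)
    have := Complex.normSq_nonneg (ρ x)
    simp only [hhdef]
    positivity
  -- a point where h is positive
  push_neg at hnz
  obtain ⟨r0, hr0, hval⟩ := hnz
  have hh0 : 0 < h r0 := by
    have h1 : (0:ℝ) < α / c2 := by rw [hαc2]; exact one_div_pos.mpr hΘ
    have h2 : (0:ℝ) < r0 ^ (α+1) := hrpow_pos r0 hr0
    rcases Classical.em (ρ r0 = 0) with hρ0 | hρ0
    · have hφ0 : φ r0 ≠ 0 := hval hρ0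
      have h3 : 0 < Complex.normSq (φ r0) := Complex.normSq_pos.2 hφ0
      have h4 : 0 ≤ r0 ^ (α+1) * Complex.normSq (ρ r0) := mul_nonneg h2.le (Complex.normSq_nonneg _)
      simp only [hhdef]
      have : 0 < α / c2 * (Complex.normSq (φ r0) / r0 ^ (α+1)) := mul_pos h1 (div_pos h3 h2)
      nlinarith [mul_nonneg (le_of_lt (one_div_pos.mpr hc1)) h4]
    · have h3 : 0 < Complex.normSq (ρ r0) := Complex.normSq_pos.2 hρ0
      have h4 : 0 ≤ Complex.normSq (φ r0) / r0 ^ (α+1) := by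
        exact div_nonneg (Complex.normSq_nonneg _) h2.le
      simp only [hhdef]
      have : 0 < 1/c1 * (r0 ^ (α+1) * Complex.normSq (ρ r0)) := mul_pos (one_div_pos.mpr hc1) (mul_pos h2 h3)
      nlinarith [mul_nonneg h1.le h4]
  -- find an interior point where h is positive
  have hclos : r0 ∈ closure (Set.Ioo R1 R2) := by
    rw [closure_Ioo (ne_of_lt hR12)]; exact hr0
  haveI hnb : (nhdsWithin r0 (Set.Ioo R1 R2)).NeBot :=
    mem_closure_iff_nhdsWithin_neBot.mp hclos
  have hev : ∀ᶠ x in nhdsWithin r0 (Set.Ioo R1 R2), 0 < h x := by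
    have hcw : ContinuousWithinAt h (Set.Icc R1 R2) r0 := hch r0 hr0
    have := hcw.eventually (eventually_gt_nhds hh0) -- might not exist; fallback below
    exact (this.filter_mono (nhdsWithin_mono r0 Set.Ioo_subset_Icc_self))
  obtain ⟨r1, hhr1, hr1⟩ := (hev.and (eventually_mem_nhdsWithin)).exists
  -- h is continuous at r1 (interior), so positive on an open neighborhood
  have hca : ContinuousAt h r1 :=
    (hch r1 (Set.Ioo_subset_Icc_self hr1)).continuousAt (Icc_mem_nhds hr1.1 hr1.2)
  have hev2 : ∀ᶠ x in nhds r1, 0 < h x := hca.eventually (eventually_gt_nhds hhr1)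
  obtain ⟨U, hUsub, hUopen, hr1U⟩ := eventually_nhds_iff.mp hev2
  -- positivity of the integral: contradiction
  have hIntOn : MeasureTheory.IntegrableOn h (Set.Ioc R1 R2) MeasureTheory.volume :=
    (hch.integrableOn_Icc).mono_set Set.Ioc_subset_Icc_self
  have hae : 0 ≤ᵐ[MeasureTheory.volume.restrict (Set.Ioc R1 R2)] h := by
    exact MeasureTheory.ae_restrict_of_forall_mem measurableSet_Ioc
      fun x hx => hhnonneg x ⟨hx.1.le, hx.2⟩
  have hsupp : 0 < MeasureTheory.volume (Function.support h ∩ Set.Ioc R1 R2) := by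
    have hsub : U ∩ Set.Ioo R1 R2 ⊆ Function.support h ∩ Set.Ioc R1 R2 := by
      rintro x ⟨hxU, hxI⟩
      exact ⟨ne_of_gt (hUsub x hxU), Set.Ioo_subset_Ioc_self hxI⟩
    have hne : (U ∩ Set.Ioo R1 R2).Nonempty := ⟨r1, hr1U, hr1⟩
    have hopen : IsOpen (U ∩ Set.Ioo R1 R2) := hUopen.inter isOpen_Ioo
    calc (0:ENNReal) < MeasureTheory.volume (U ∩ Set.Ioo R1 R2) :=
          hopen.measure_pos MeasureTheory.volume hne
      _ ≤ _ := MeasureTheory.measure_mono hsub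
  have hpos' : 0 < ∫ x in Set.Ioc R1 R2, h x :=
    (MeasureTheory.setIntegral_pos_iff_support_of_nonneg_ae hae hIntOn).2 hsupp
  rw [← intervalIntegral.integral_of_le hR12', hInth] at hpos'
  exact lt_irrefl 0 hpos'
end

section
/- Let c1 > 0, Θ > 0, c2 ∈ ℝ with c2 ≠ 0, α = c2/Θ, 0 < R1 < R2, n ∈ ℤ and λ ∈ ℂ with Re λ ≠ 0. Suppose ρ, φ : [R1,R2] → ℂ are continuously differentiable and satisfy the transformed first-order system (T1)–(T2) for all r ∈ [R1,R2]. Then the function g(r) = φ'(r) / (r^{α+1}(λ/c1 − i n/r)) is differentiable on (R1,R2) and for all r ∈ (R1,R2): g'(r) − (1/r^{α+1})(λ/Θ − i n α / r) φ(r) = 0. -/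
open Real Set

/-- second-order reduction (equation (2.16) of the paper). If `Re λ ≠ 0`
and `(ρ,φ)` solves (T1)–(T2), then `g(r) = φ'(r)/(r^{α+1}(λ/c1 − in/r))` is differentiable
on `(R1,R2)` and satisfies `g' − r^{−(α+1)}(λ/Θ − inα/r) φ = 0` there. -/
theorem stmt_6 (c1 c2 Θ α R1 R2 : ℝ) (n : ℤ) (lam : ℂ)
    (hc1 : 0 < c1) (hΘ : 0 < Θ) (hc2 : c2 ≠ 0) (hα : α = c2 / Θ)
    (hR1 : 0 < R1) (hR12 : R1 < R2) (hre : lam.re ≠ 0)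
    (ρ φ : ℝ → ℂ)
    (hρ : ContDiffOn ℝ 1 ρ (Set.Icc R1 R2)) (hφ : ContDiffOn ℝ 1 φ (Set.Icc R1 R2))
    (hsys : TransSystem c1 c2 α R1 R2 n lam ρ φ)
    (g : ℝ → ℂ)
    (hg : ∀ r : ℝ, g r = deriv φ r /
      (((r ^ (α + 1) : ℝ) : ℂ) * (lam / (c1 : ℂ) - Complex.I * (n : ℂ) / (r : ℂ)))) :
    ∀ r ∈ Set.Ioo R1 R2,
      DifferentiableAt ℝ g r ∧
      deriv g r - ((1 / r ^ (α + 1) : ℝ) : ℂ) *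
        (lam / (Θ : ℂ) - Complex.I * (n : ℂ) * (α : ℂ) / (r : ℂ)) * φ r = 0 := by
  -- the factor never vanishes and r^{α+1} ≠ 0 on [R1,R2]
  have hfac : ∀ s : ℝ, (lam / (c1 : ℂ) - Complex.I * (n : ℂ) / (s : ℂ)) ≠ 0 := by
    intro s h
    have : (lam / (c1 : ℂ) - Complex.I * (n : ℂ) / (s : ℂ)).re = 0 := by rw [h]; simp
    simp [Complex.div_re, Complex.normSq] at this
    rcases this with h1 | h1
    · exact hre h1
    · exact hc1.ne' h1
  -- g = -ρ on [R1,R2]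
  have hgρ : ∀ s ∈ Set.Icc R1 R2, g s = -ρ s := by
    intro s hs
    have hs0 : (0:ℝ) < s := lt_of_lt_of_le hR1 hs.1
    have hpow : ((s ^ (α + 1) : ℝ) : ℂ) ≠ 0 := by
      exact_mod_cast (Real.rpow_pos_of_pos hs0 (α + 1)).ne'
    have hT2 := (hsys s hs).2
    have hdφ : deriv φ s = -((lam / (c1 : ℂ) - Complex.I * (n : ℂ) / (s : ℂ)) *
        ((s ^ (α + 1) : ℝ) : ℂ) * ρ s) := by linear_combination hT2
    rw [hg s, hdφ]
    field_simp [hfac s]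
  intro r hr
  have hrIcc : r ∈ Set.Icc R1 R2 := Set.Ioo_subset_Icc_self hr
  have hr0 : (0:ℝ) < r := lt_of_lt_of_le hR1 hrIcc.1
  have hpow : ((r ^ (α + 1) : ℝ) : ℂ) ≠ 0 := by
    exact_mod_cast (Real.rpow_pos_of_pos hr0 (α + 1)).ne'
  have hmem : Set.Icc R1 R2 ∈ nhds r := Icc_mem_nhds hr.1 hr.2
  have hρdiff : DifferentiableAt ℝ ρ r :=
    (hρ.differentiableOn one_ne_zero).differentiableAt hmem
  have heq : g =ᶠ[nhds r] fun s => -ρ s := by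
    filter_upwards [hmem] with s hs using hgρ s hs
  have hgdiff : DifferentiableAt ℝ g r :=
    (hρdiff.neg).congr_of_eventuallyEq heq
  refine ⟨hgdiff, ?_⟩
  have hderiv : deriv g r = -deriv ρ r := by
    rw [heq.deriv_eq]; exact deriv.neg
  have hT1 := (hsys r hrIcc).1
  have hdρ : deriv ρ r = -(((α / r ^ (α + 1) : ℝ) : ℂ) *
      (lam / (c2 : ℂ) - Complex.I * (n : ℂ) / (r : ℂ)) * φ r) := by
    linear_combination hT1
  rw [hderiv, hdρ]
  have hΘ' : (Θ : ℂ) ≠ 0 := by exact_mod_cast hΘ.ne'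
  have hc2' : (c2 : ℂ) ≠ 0 := by exact_mod_cast hc2
  have hr' : (r : ℂ) ≠ 0 := by exact_mod_cast hr0.ne'
  have hαc : (α : ℂ) = (c2 : ℂ) / (Θ : ℂ) := by exact_mod_cast hα
  push_cast
  rw [hαc]
  field_simp
  ring
end

section
/- Let c1 > 0, Θ > 0, c2 ∈ ℝ with c2 ≠ 0, α = c2/Θ, 0 < R1 < R2, n ∈ ℤ, and λ = μ + iν with μ, ν ∈ ℝ and μ ≠ 0. Suppose φ : [R1,R2] → ℂ is continuously differentiable with φ(R1) = φ(R2) = 0, the function g(r) = φ'(r)/(r^{α+1}(λ/c1 − i n/r)) is continuously differentiable on [R1,R2], and g'(r) − (1/r^{α+1})(λ/Θ − i n α/r) φ(r) = 0 on [R1,R2]. Then ∫_{R1}^{R2} (μ/c1) |φ'(r)|² / (r^{α+1}((μ/c1)² + (ν/c1 − n/r)²)) dr + ∫_{R1}^{R2} (μ/Θ) r^{−(α+1)} |φ(r)|² dr = 0, and consequently φ(r) = 0 for all r ∈ [R1,R2]. -/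
open Real Set Complex
set_option maxRecDepth 8000
set_option maxHeartbeats 1600000

noncomputable def Df (lam : ℂ) (c1 : ℝ) (n : ℤ) (r : ℝ) : ℂ :=
  lam / (c1:ℂ) - Complex.I * (n:ℂ) / (r:ℂ)

noncomputable def Ef (lam : ℂ) (Θ α : ℝ) (n : ℤ) (r : ℝ) : ℂ :=
  lam / (Θ:ℂ) - Complex.I * (n:ℂ) * (α:ℂ) / (r:ℂ)

noncomputable def Hf (g φ : ℝ → ℂ) (R1 R2 : ℝ) (r : ℝ) : ℂ :=
  derivWithin g (Set.Icc R1 R2) r * (starRingEnd ℂ) (φ r) + g r * (starRingEnd ℂ) (deriv φ r)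

/-- the energy identity from the proof of Lemma 2 of the paper, and the
resulting vanishing of `φ` when `Re λ = μ ≠ 0`. -/
theorem stmt_7 (c1 c2 Θ α R1 R2 : ℝ) (n : ℤ) (mu nu : ℝ) (lam : ℂ)
    (hc1 : 0 < c1) (hΘ : 0 < Θ) (hc2 : c2 ≠ 0) (hα : α = c2 / Θ)
    (hR1 : 0 < R1) (hR12 : R1 < R2)
    (hlam : lam = (mu : ℂ) + (nu : ℂ) * Complex.I) (hmu : mu ≠ 0)
    (φ : ℝ → ℂ) (hφ : ContDiffOn ℝ 1 φ (Set.Icc R1 R2))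
    (hbc1 : φ R1 = 0) (hbc2 : φ R2 = 0)
    (g : ℝ → ℂ)
    (hg : ∀ r : ℝ, g r = deriv φ r /
      (((r ^ (α + 1) : ℝ) : ℂ) * (lam / (c1 : ℂ) - Complex.I * (n : ℂ) / (r : ℂ))))
    (hgC1 : ContDiffOn ℝ 1 g (Set.Icc R1 R2))
    (heq : ∀ r ∈ Set.Icc R1 R2,
      deriv g r - ((1 / r ^ (α + 1) : ℝ) : ℂ) *
        (lam / (Θ : ℂ) - Complex.I * (n : ℂ) * (α : ℂ) / (r : ℂ)) * φ r = 0) :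
    ((∫ r in R1..R2, (mu / c1) * ‖deriv φ r‖ ^ 2 /
        (r ^ (α + 1) * ((mu / c1) ^ 2 + (nu / c1 - (n : ℝ) / r) ^ 2)))
      + ∫ r in R1..R2, (mu / Θ) * r ^ (-(α + 1)) * ‖φ r‖ ^ 2 = 0)
    ∧ ∀ r ∈ Set.Icc R1 R2, φ r = 0 := by
  have hle : R1 ≤ R2 := hR12.le
  have hrpos : ∀ r ∈ Icc R1 R2, (0:ℝ) < r := fun r hr => hR1.trans_le hr.1
  have hrne : ∀ r ∈ Icc R1 R2, r ≠ 0 := fun r hr => (hrpos r hr).ne'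
  have hP : ∀ r ∈ Icc R1 R2, (0:ℝ) < r ^ (α+1) := fun r hr => Real.rpow_pos_of_pos (hrpos r hr) _
  have hDform : ∀ r : ℝ, r ≠ 0 →
      Df lam c1 n r = ((mu/c1 : ℝ):ℂ) + ((nu/c1 - n/r : ℝ):ℂ) * Complex.I := by
    intro r hr
    have hc1' : (c1:ℂ) ≠ 0 := by exact_mod_cast hc1.ne'
    have hr' : (r:ℂ) ≠ 0 := by exact_mod_cast hr
    rw [Df, hlam]; push_cast; field_simp; ring
  have hDre : ∀ r : ℝ, r ≠ 0 → (Df lam c1 n r).re = mu / c1 := by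
    intro r hr; rw [hDform r hr]; simp
  have hD0 : ∀ r : ℝ, r ≠ 0 → Df lam c1 n r ≠ 0 := by
    intro r hr h0
    have := hDre r hr
    rw [h0] at this
    exact hmu (by field_simp at this; simpa using this.symm)
  have hDsq : ∀ r : ℝ, r ≠ 0 →
      Complex.normSq (Df lam c1 n r) = (mu/c1)^2 + (nu/c1 - n/r)^2 := by
    intro r hr; rw [hDform r hr]; simpa using Complex.normSq_add_mul_I (mu/c1) (nu/c1 - n/r)
  have hEre : ∀ r : ℝ, r ≠ 0 → (Ef lam Θ α n r).re = mu / Θ := by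
    intro r hr
    have hΘ' : (Θ:ℂ) ≠ 0 := by exact_mod_cast hΘ.ne'
    have hr' : (r:ℂ) ≠ 0 := by exact_mod_cast hr
    have h : Ef lam Θ α n r = ((mu/Θ : ℝ):ℂ) + ((nu/Θ - n*α/r : ℝ):ℂ) * Complex.I := by
      rw [Ef, hlam]; push_cast; field_simp; ring
    rw [h]; simp
  -- derivative formula for φ
  have hderivφ : ∀ r ∈ Icc R1 R2,
      deriv φ r = g r * (((r ^ (α+1) : ℝ):ℂ) * Df lam c1 n r) := by
    intro r hr
    have hne : (((r ^ (α+1) : ℝ):ℂ) * Df lam c1 n r) ≠ 0 :=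
      mul_ne_zero (by exact_mod_cast (hP r hr).ne') (hD0 r (hrne r hr))
    rw [hg r, Df, div_mul_cancel₀ _ (by rw [Df] at hne; exact hne)]
  -- continuity facts
  have hφcont : ContinuousOn φ (Icc R1 R2) := hφ.continuousOn
  have hgcont : ContinuousOn g (Icc R1 R2) := hgC1.continuousOn
  have hrpowcont : ContinuousOn (fun r : ℝ => r ^ (α+1)) (Icc R1 R2) := fun r hr =>
    (Real.continuousAt_rpow_const r _ (Or.inl (hrne r hr))).continuousWithinAt
  have hDcont : ContinuousOn (Df lam c1 n) (Icc R1 R2) := by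
    unfold Df
    apply ContinuousOn.sub continuousOn_const
    exact ContinuousOn.div continuousOn_const
      (Complex.continuous_ofReal.continuousOn)
      (fun r hr => by exact_mod_cast hrne r hr)
  have hφ'cont : ContinuousOn (deriv φ) (Icc R1 R2) := by
    apply ContinuousOn.congr
      (hgcont.mul ((Complex.continuous_ofReal.comp_continuousOn hrpowcont).mul hDcont))
    exact hderivφ
  have hGcont : ContinuousOn (fun r => derivWithin g (Icc R1 R2) r) (Icc R1 R2) :=
    hgC1.continuousOn_derivWithin (uniqueDiffOn_Icc hR12) le_rfl
  have hGeq : ∀ r ∈ Ioo R1 R2, derivWithin g (Icc R1 R2) r = deriv g r := fun r hr =>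
    derivWithin_of_mem_nhds (Icc_mem_nhds hr.1 hr.2)
  have hFcont : ContinuousOn (fun r => g r * (starRingEnd ℂ) (φ r)) (Icc R1 R2) :=
    hgcont.mul hφcont.star
  have hHcont : ContinuousOn (Hf g φ R1 R2) (Icc R1 R2) := by
    unfold Hf
    exact (hGcont.mul hφcont.star).add (hgcont.mul hφ'cont.star)
  have hHint : IntervalIntegrable (Hf g φ R1 R2) MeasureTheory.volume R1 R2 :=
    hHcont.intervalIntegrable_of_Icc hle
  have hFd : ∀ r ∈ Ioo R1 R2,
      HasDerivAt (fun r => g r * (starRingEnd ℂ) (φ r)) (Hf g φ R1 R2 r) r := by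
    intro r hr
    have hmem : Icc R1 R2 ∈ nhds r := Icc_mem_nhds hr.1 hr.2
    have hricc : r ∈ Icc R1 R2 := Ioo_subset_Icc_self hr
    have hgd : HasDerivAt g (deriv g r) r :=
      ((hgC1.differentiableOn one_ne_zero r hricc).differentiableAt hmem).hasDerivAt
    have hφd : HasDerivAt φ (deriv φ r) r :=
      ((hφ.differentiableOn one_ne_zero r hricc).differentiableAt hmem).hasDerivAt
    have key := hgd.mul hφd.star
    have hHr : Hf g φ R1 R2 r
        = deriv g r * (starRingEnd ℂ) (φ r) + g r * (starRingEnd ℂ) (deriv φ r) := by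
      rw [Hf, hGeq r hr]
    rw [hHr]
    exact key
  have hFTC : ∫ r in R1..R2, Hf g φ R1 R2 r
      = (fun r => g r * (starRingEnd ℂ) (φ r)) R2 - (fun r => g r * (starRingEnd ℂ) (φ r)) R1 :=
    intervalIntegral.integral_eq_sub_of_hasDeriv_right_of_le hle hFcont
      (fun x hx => (hFd x hx).hasDerivWithinAt) hHint
  have hint0 : ∫ r in R1..R2, Hf g φ R1 R2 r = 0 := by
    rw [hFTC]; simp [hbc1, hbc2]
  have hre0 : ∫ r in R1..R2, (Hf g φ R1 R2 r).re = 0 := by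
    have := Complex.reCLM.intervalIntegral_comp_comm hHint
    simp only [hint0, map_zero] at this
    simpa using this
  -- pointwise real-part identities
  have hterm2 : ∀ r ∈ Icc R1 R2,
      (g r * (starRingEnd ℂ) (deriv φ r)).re
        = mu / c1 * (Complex.normSq (g r) * r ^ (α+1)) := by
    intro r hr
    rw [hderivφ r hr]
    have hmc : g r * (starRingEnd ℂ) (g r * (((r ^ (α+1) : ℝ):ℂ) * Df lam c1 n r))
        = ((Complex.normSq (g r) * r ^ (α+1) : ℝ):ℂ) * (starRingEnd ℂ) (Df lam c1 n r) := by
      rw [map_mul, map_mul, Complex.conj_ofReal]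
      push_cast
      linear_combination (((r ^ (α+1) : ℝ):ℂ) * (starRingEnd ℂ) (Df lam c1 n r)) *
        Complex.mul_conj (g r)
    rw [hmc]
    simp only [Complex.mul_re, Complex.ofReal_re, Complex.ofReal_im, Complex.conj_re,
      Complex.conj_im, hDre r (hrne r hr), zero_mul, sub_zero]
    ring
  have hterm1 : ∀ r ∈ Icc R1 R2,
      (derivWithin g (Icc R1 R2) r * (starRingEnd ℂ) (φ r)).re
        = mu / Θ * (Complex.normSq (φ r) * r ^ (-(α+1))) := by
    intro r hr
    by_cases hIoo : r ∈ Ioo R1 R2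
    · have hgr : deriv g r = ((1 / r^(α+1) : ℝ):ℂ) * Ef lam Θ α n r * φ r := by
        have h := heq r hr
        rw [sub_eq_zero] at h
        rw [Ef]
        exact h
      rw [hGeq r hIoo, hgr]
      have hmc : ((1 / r^(α+1) : ℝ):ℂ) * Ef lam Θ α n r * φ r * (starRingEnd ℂ) (φ r)
          = ((1 / r^(α+1) * Complex.normSq (φ r) : ℝ):ℂ) * Ef lam Θ α n r := by
        rw [mul_assoc, Complex.mul_conj]
        push_cast
        ring
      rw [hmc]
      simp only [Complex.mul_re, Complex.ofReal_re, Complex.ofReal_im, zero_mul, sub_zero,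
        hEre r (hrne r hr)]
      rw [Real.rpow_neg (hrpos r hr).le]
      field_simp
    · have hend : φ r = 0 := by
        rcases eq_or_lt_of_le hr.1 with h1 | h1
        · rw [← h1]; exact hbc1
        rcases eq_or_lt_of_le hr.2 with h2 | h2
        · rw [h2]; exact hbc2
        exact absurd ⟨h1, h2⟩ hIoo
      rw [hend]
      simp
  -- positivity of the weight
  have hmuc1 : mu / c1 ≠ 0 := div_ne_zero hmu hc1.ne'
  have hw : ∀ r : ℝ, (0:ℝ) < (mu/c1)^2 + (nu/c1 - (n:ℝ)/r)^2 := fun r =>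
    add_pos_of_pos_of_nonneg (by positivity) (sq_nonneg _)
  -- the two integrands
  have hkey : ∀ r ∈ Icc R1 R2, (Hf g φ R1 R2 r).re
      = (mu / c1) * ‖deriv φ r‖ ^ 2 /
          (r ^ (α + 1) * ((mu / c1) ^ 2 + (nu / c1 - (n : ℝ) / r) ^ 2))
        + (mu / Θ) * r ^ (-(α + 1)) * ‖φ r‖ ^ 2 := by
    intro r hr
    have habs : ‖deriv φ r‖ ^ 2
        = Complex.normSq (g r) * ((r ^ (α+1))^2 * ((mu/c1)^2 + (nu/c1 - (n:ℝ)/r)^2)) := by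
      rw [Complex.sq_norm, hderivφ r hr, Complex.normSq_mul, Complex.normSq_mul,
        Complex.normSq_ofReal, hDsq r (hrne r hr)]
      ring
    have h1 : (mu / c1) * ‖deriv φ r‖ ^ 2 /
          (r ^ (α + 1) * ((mu / c1) ^ 2 + (nu / c1 - (n : ℝ) / r) ^ 2))
        = mu / c1 * (Complex.normSq (g r) * r ^ (α+1)) := by
      rw [habs]
      have hp := (hP r hr).ne'
      have hwr := (hw r).ne'
      field_simp
    have h2 : (mu / Θ) * r ^ (-(α + 1)) * ‖φ r‖ ^ 2
        = mu / Θ * (Complex.normSq (φ r) * r ^ (-(α+1))) := by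
      rw [Complex.sq_norm]; ring
    rw [h1, h2, Hf, Complex.add_re, hterm1 r hr, hterm2 r hr]
    ring
  -- the energy identity
  have hEnergy : (∫ r in R1..R2, ((mu / c1) * ‖deriv φ r‖ ^ 2 /
        (r ^ (α + 1) * ((mu / c1) ^ 2 + (nu / c1 - (n : ℝ) / r) ^ 2))
        + (mu / Θ) * r ^ (-(α + 1)) * ‖φ r‖ ^ 2)) = 0 := by
    rw [← hre0]
    apply intervalIntegral.integral_congr
    intro r hr
    rw [uIcc_of_le hle] at hr
    exact (hkey r hr).symm
  -- continuity and integrability of the two integrands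
  have hf1cont : ContinuousOn (fun r => (mu / c1) * ‖deriv φ r‖ ^ 2 /
      (r ^ (α + 1) * ((mu / c1) ^ 2 + (nu / c1 - (n : ℝ) / r) ^ 2))) (Icc R1 R2) := by
    apply ContinuousOn.div
    · exact continuousOn_const.mul ((continuous_norm.comp_continuousOn hφ'cont).pow 2)
    · exact hrpowcont.mul (continuousOn_const.add ((continuousOn_const.sub
        (continuousOn_const.div continuousOn_id hrne)).pow 2))
    · exact fun r hr => (mul_pos (hP r hr) (hw r)).ne'
  have hrpowneg : ContinuousOn (fun r : ℝ => r ^ (-(α+1))) (Icc R1 R2) := fun r hr =>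
    (Real.continuousAt_rpow_const r _ (Or.inl (hrne r hr))).continuousWithinAt
  have hf2cont : ContinuousOn (fun r => (mu / Θ) * r ^ (-(α + 1)) * ‖φ r‖ ^ 2)
      (Icc R1 R2) :=
    (continuousOn_const.mul hrpowneg).mul ((continuous_norm.comp_continuousOn hφcont).pow 2)
  have hf1int : IntervalIntegrable (fun r => (mu / c1) * ‖deriv φ r‖ ^ 2 /
      (r ^ (α + 1) * ((mu / c1) ^ 2 + (nu / c1 - (n : ℝ) / r) ^ 2)))
      MeasureTheory.volume R1 R2 := hf1cont.intervalIntegrable_of_Icc hle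
  have hf2int : IntervalIntegrable (fun r => (mu / Θ) * r ^ (-(α + 1)) * ‖φ r‖ ^ 2)
      MeasureTheory.volume R1 R2 := hf2cont.intervalIntegrable_of_Icc hle
  have hsplit : (∫ r in R1..R2, (mu / c1) * ‖deriv φ r‖ ^ 2 /
        (r ^ (α + 1) * ((mu / c1) ^ 2 + (nu / c1 - (n : ℝ) / r) ^ 2)))
      + ∫ r in R1..R2, (mu / Θ) * r ^ (-(α + 1)) * ‖φ r‖ ^ 2 = 0 := by
    rw [← intervalIntegral.integral_add hf1int hf2int]
    exact hEnergy
  refine ⟨hsplit, ?_⟩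
  -- sign argument
  obtain ⟨s, hs⟩ : ∃ s : ℝ, 0 < s * mu := by
    rcases lt_or_gt_of_ne hmu with h | h
    · exact ⟨-1, by nlinarith⟩
    · exact ⟨1, by nlinarith⟩
  have hnn1 : ∀ r ∈ Icc R1 R2, 0 ≤ s * ((mu / c1) * ‖deriv φ r‖ ^ 2 /
      (r ^ (α + 1) * ((mu / c1) ^ 2 + (nu / c1 - (n : ℝ) / r) ^ 2))) := by
    intro r hr
    have h : s * ((mu / c1) * ‖deriv φ r‖ ^ 2 /
        (r ^ (α + 1) * ((mu / c1) ^ 2 + (nu / c1 - (n : ℝ) / r) ^ 2)))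
        = (s * mu) * (‖deriv φ r‖ ^ 2 /
          (c1 * (r ^ (α + 1) * ((mu / c1) ^ 2 + (nu / c1 - (n : ℝ) / r) ^ 2)))) := by
      field_simp
    rw [h]
    exact mul_nonneg hs.le (div_nonneg (sq_nonneg _)
      (mul_nonneg hc1.le (mul_pos (hP r hr) (hw r)).le))
  have hnn2 : ∀ r ∈ Icc R1 R2,
      0 ≤ s * ((mu / Θ) * r ^ (-(α + 1)) * ‖φ r‖ ^ 2) := by
    intro r hr
    have h : s * ((mu / Θ) * r ^ (-(α + 1)) * ‖φ r‖ ^ 2)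
        = (s * mu) * (r ^ (-(α + 1)) * ‖φ r‖ ^ 2 / Θ) := by
      field_simp
    rw [h]
    exact mul_nonneg hs.le (div_nonneg (mul_nonneg
      (Real.rpow_nonneg (hrpos r hr).le _) (sq_nonneg _)) hΘ.le)
  have hI1 : 0 ≤ s * ∫ r in R1..R2, (mu / c1) * ‖deriv φ r‖ ^ 2 /
      (r ^ (α + 1) * ((mu / c1) ^ 2 + (nu / c1 - (n : ℝ) / r) ^ 2)) := by
    rw [← intervalIntegral.integral_const_mul]
    exact intervalIntegral.integral_nonneg hle hnn1
  have hI2 : 0 ≤ s * ∫ r in R1..R2, (mu / Θ) * r ^ (-(α + 1)) * ‖φ r‖ ^ 2 := by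
    rw [← intervalIntegral.integral_const_mul]
    exact intervalIntegral.integral_nonneg hle hnn2
  have hzero : ∫ r in R1..R2, s * ((mu / Θ) * r ^ (-(α + 1)) * ‖φ r‖ ^ 2) = 0 := by
    rw [intervalIntegral.integral_const_mul]
    have h0 : (s * ∫ r in R1..R2, (mu / c1) * ‖deriv φ r‖ ^ 2 /
        (r ^ (α + 1) * ((mu / c1) ^ 2 + (nu / c1 - (n : ℝ) / r) ^ 2)))
        + s * ∫ r in R1..R2, (mu / Θ) * r ^ (-(α + 1)) * ‖φ r‖ ^ 2 = 0 := by
      rw [← mul_add, hsplit, mul_zero]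
    linarith
  -- conclude φ = 0
  intro r0 hr0
  by_contra hphi
  have hr0o : r0 ∈ Ioo R1 R2 := by
    rcases eq_or_lt_of_le hr0.1 with h1 | h1
    · exact absurd (h1 ▸ hbc1) hphi
    rcases eq_or_lt_of_le hr0.2 with h2 | h2
    · exact absurd (h2 ▸ hbc2) hphi
    exact ⟨h1, h2⟩
  have hf2'cont : ContinuousOn
      (fun r => s * ((mu / Θ) * r ^ (-(α + 1)) * ‖φ r‖ ^ 2)) (Icc R1 R2) :=
    continuousOn_const.mul hf2cont
  have hf2'int : IntervalIntegrable
      (fun r => s * ((mu / Θ) * r ^ (-(α + 1)) * ‖φ r‖ ^ 2))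
      MeasureTheory.volume R1 R2 := hf2'cont.intervalIntegrable_of_Icc hle
  have habs0 : 0 < ‖φ r0‖ := norm_pos_iff.mpr hphi
  have hpos : 0 < s * ((mu / Θ) * r0 ^ (-(α + 1)) * ‖φ r0‖ ^ 2) := by
    have h : s * ((mu / Θ) * r0 ^ (-(α + 1)) * ‖φ r0‖ ^ 2)
        = (s * mu) * (r0 ^ (-(α + 1)) * ‖φ r0‖ ^ 2 / Θ) := by
      field_simp
    rw [h]
    exact mul_pos hs (div_pos (mul_pos
      (Real.rpow_pos_of_pos (hrpos r0 hr0) _) (pow_pos habs0 2)) hΘ)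
  have hc : ContinuousAt
      (fun r => s * ((mu / Θ) * r ^ (-(α + 1)) * ‖φ r‖ ^ 2)) r0 :=
    (hf2'cont r0 hr0).continuousAt (Icc_mem_nhds hr0o.1 hr0o.2)
  have hev : ∀ᶠ x in nhds r0,
      0 < s * ((mu / Θ) * x ^ (-(α + 1)) * ‖φ x‖ ^ 2) :=
    hc.eventually (eventually_gt_nhds hpos)
  obtain ⟨ε, hε, hball⟩ := Metric.eventually_nhds_iff.mp hev
  set a := max R1 (r0 - ε/2) with hadef
  set b := min R2 (r0 + ε/2) with hbdef
  have haR1 : R1 ≤ a := le_max_left _ _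
  have hbR2 : b ≤ R2 := min_le_left _ _
  have har0 : a < r0 := max_lt hr0o.1 (by linarith)
  have hr0b : r0 < b := lt_min hr0o.2 (by linarith)
  have hab : a < b := har0.trans hr0b
  have hsub : ∀ x ∈ Ioo a b, 0 < s * ((mu / Θ) * x ^ (-(α + 1)) * ‖φ x‖ ^ 2) := by
    intro x hx
    apply hball
    have hx1 : r0 - ε/2 ≤ a := le_max_right _ _
    have hx2 : b ≤ r0 + ε/2 := min_le_right _ _
    rw [Real.dist_eq, abs_lt]
    constructor <;> [linarith [hx.1]; linarith [hx.2]]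
  have hmono : ∀ c d : ℝ, R1 ≤ c → c ≤ d → d ≤ R2 → IntervalIntegrable
      (fun r => s * ((mu / Θ) * r ^ (-(α + 1)) * ‖φ r‖ ^ 2))
      MeasureTheory.volume c d := by
    intro c d h1 h2 h3
    apply hf2'int.mono_set
    rw [uIcc_of_le h2, uIcc_of_le hle]
    exact Icc_subset_Icc h1 h3
  have hposint : 0 < ∫ x in a..b, s * ((mu / Θ) * x ^ (-(α + 1)) * ‖φ x‖ ^ 2) :=
    intervalIntegral.intervalIntegral_pos_of_pos_on
      (hmono a b haR1 hab.le hbR2) hsub hab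
  have hadd1 := intervalIntegral.integral_add_adjacent_intervals
    (hmono R1 a (le_refl _) haR1 (hab.le.trans hbR2))
    (hmono a b haR1 hab.le hbR2)
  have hadd2 := intervalIntegral.integral_add_adjacent_intervals
    (hmono R1 b (le_refl _) (haR1.trans hab.le) hbR2)
    (hmono b R2 (haR1.trans hab.le) hbR2 (le_refl _))
  have hn1 : 0 ≤ ∫ x in R1..a, s * ((mu / Θ) * x ^ (-(α + 1)) * ‖φ x‖ ^ 2) :=
    intervalIntegral.integral_nonneg haR1
      (fun u hu => hnn2 u ⟨hu.1, hu.2.trans (hab.le.trans hbR2)⟩)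
  have hn3 : 0 ≤ ∫ x in b..R2, s * ((mu / Θ) * x ^ (-(α + 1)) * ‖φ x‖ ^ 2) :=
    intervalIntegral.integral_nonneg hbR2
      (fun u hu => hnn2 u ⟨(haR1.trans hab.le).trans hu.1, hu.2⟩)
  linarith
end

section
/- Let c1 > 0, Θ > 0, c2 ∈ ℝ with c2 ≠ 0, α = c2/Θ, ρ* > 0, ρ_s(r) = ρ* r^α, and 0 < R1 < R2. Suppose ρ̂, φ̂ : [R1,R2] → ℂ are continuously differentiable, satisfy the eigen-system (E1)–(E2) with n = 0 and λ = 0, i.e. c1 ρ_s(r) φ̂'(r) + (1+α)(c1/r) ρ_s(r) φ̂(r) = 0 and (c2/(α ρ_s(r))) ρ̂'(r) − (c2/(r ρ_s(r))) ρ̂(r) = 0 for all r ∈ [R1,R2], together with φ̂(R1) = 0 and ∫_{R1}^{R2} ρ̂(r) r dr = 0. Then ρ̂(r) = 0 and φ̂(r) = 0 for all r ∈ [R1,R2]. -/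
open Real Set

/-- A continuous function on `Icc a b` that equals a constant on `Ioo a b`
equals that constant on all of `Icc a b`. -/
lemma eqConst_Icc_of_eqConst_Ioo {f : ℝ → ℂ} {a b : ℝ} (hab : a < b)
    (hf : ContinuousOn f (Set.Icc a b)) {c : ℂ}
    (h : ∀ x ∈ Set.Ioo a b, f x = c) :
    ∀ x ∈ Set.Icc a b, f x = c := by
  intro x hx
  have hxcl : x ∈ closure (Set.Ioo a b) := by
    rw [closure_Ioo hab.ne]; exact hx
  have hne : (nhdsWithin x (Set.Ioo a b)).NeBot :=
    mem_closure_iff_nhdsWithin_neBot.mp hxcl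
  have h1 : Filter.Tendsto f (nhdsWithin x (Set.Ioo a b)) (nhds (f x)) :=
    (hf x hx).mono_left (nhdsWithin_mono _ Set.Ioo_subset_Icc_self)
  have h2 : Filter.Tendsto f (nhdsWithin x (Set.Ioo a b)) (nhds c) := by
    refine Filter.Tendsto.congr' ?_ tendsto_const_nhds
    filter_upwards [self_mem_nhdsWithin] with y hy
    exact (h y hy).symm
  exact tendsto_nhds_unique h1 h2

/-- A function with vanishing derivative on `Ioo a b` is constant there. -/
lemma const_of_hasDerivAt_zero_Ioo {f : ℝ → ℂ} {a b : ℝ}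
    (h : ∀ x ∈ Set.Ioo a b, HasDerivAt f 0 x) :
    ∀ x ∈ Set.Ioo a b, ∀ y ∈ Set.Ioo a b, f x = f y := by
  intro x hx y hy
  refine (convex_Ioo a b).is_const_of_fderivWithin_eq_zero
    (fun z hz => (h z hz).differentiableAt.differentiableWithinAt) ?_ hx hy
  intro z hz
  rw [fderivWithin_of_isOpen isOpen_Ioo hz, (h z hz).hasFDerivAt.fderiv]
  ext
  simp

/-- `0` is not an eigenvalue of `L_0`: any solution of the `n = 0`,
`λ = 0` eigen-system with `φ̂(R1) = 0` and zero total mass `∫ ρ̂ r dr = 0` vanishes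
identically. -/
theorem stmt_10 (c1 c2 Θ α ρstar R1 R2 : ℝ)
    (hc1 : 0 < c1) (hΘ : 0 < Θ) (hc2 : c2 ≠ 0) (hα : α = c2 / Θ)
    (hρstar : 0 < ρstar) (hR1 : 0 < R1) (hR12 : R1 < R2)
    (ρh φh : ℝ → ℂ)
    (hρh : ContDiffOn ℝ 1 ρh (Set.Icc R1 R2)) (hφh : ContDiffOn ℝ 1 φh (Set.Icc R1 R2))
    (heq1 : ∀ r ∈ Set.Icc R1 R2,
      ((c1 * (ρstar * r ^ α) : ℝ) : ℂ) * deriv φh r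
        + (((1 + α) * (c1 / r) * (ρstar * r ^ α) : ℝ) : ℂ) * φh r = 0)
    (heq2 : ∀ r ∈ Set.Icc R1 R2,
      ((c2 / (α * (ρstar * r ^ α)) : ℝ) : ℂ) * deriv ρh r
        - ((c2 / (r * (ρstar * r ^ α)) : ℝ) : ℂ) * ρh r = 0)
    (hbc : φh R1 = 0)
    (hmass : ∫ r in R1..R2, ρh r * (r : ℂ) = 0) :
    ∀ r ∈ Set.Icc R1 R2, ρh r = 0 ∧ φh r = 0 := by
  have hαne : α ≠ 0 := by rw [hα]; exact div_ne_zero hc2 hΘ.ne'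
  have hposIcc : ∀ r ∈ Set.Icc R1 R2, 0 < r := fun r hr => lt_of_lt_of_le hR1 hr.1
  have hposIoo : ∀ r ∈ Set.Ioo R1 R2, 0 < r := fun r hr => lt_trans hR1 hr.1
  -- the actual derivative of ρh on the open interval
  have hρd : ∀ r ∈ Set.Ioo R1 R2, HasDerivAt ρh ((α / r : ℝ) • ρh r) r := by
    intro r hr
    have hr0 : 0 < r := hposIoo r hr
    have hmem : Set.Icc R1 R2 ∈ nhds r := Icc_mem_nhds hr.1 hr.2
    have hda : DifferentiableAt ℝ ρh r :=
      ((hρh.differentiableOn one_ne_zero) r (Set.Ioo_subset_Icc_self hr)).differentiableAt hmem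
    have heq := heq2 r (Set.Ioo_subset_Icc_self hr)
    have hρs : 0 < ρstar * r ^ α := mul_pos hρstar (Real.rpow_pos_of_pos hr0 α)
    have hAC : ((c2 / (α * (ρstar * r ^ α)) : ℝ) : ℂ) ≠ 0 := by
      exact_mod_cast div_ne_zero hc2 (mul_ne_zero hαne hρs.ne')
    have hreal : (c2 / (α * (ρstar * r ^ α))) * (α / r) = c2 / (r * (ρstar * r ^ α)) := by
      field_simp
    have hd : deriv ρh r = ((α / r : ℝ) : ℂ) * ρh r := by
      refine mul_left_cancel₀ hAC ?_
      have hkey : ((c2 / (α * (ρstar * r ^ α)) : ℝ) : ℂ) * (((α / r : ℝ) : ℂ) * ρh r)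
          = ((c2 / (r * (ρstar * r ^ α)) : ℝ) : ℂ) * ρh r := by
        rw [← mul_assoc, ← Complex.ofReal_mul, hreal]
      rw [hkey]
      linear_combination heq
    have := hda.hasDerivAt
    rw [hd] at this
    rwa [Complex.real_smul]
  -- the actual derivative of φh on the open interval
  have hφd : ∀ r ∈ Set.Ioo R1 R2, HasDerivAt φh ((-(1 + α) / r : ℝ) • φh r) r := by
    intro r hr
    have hr0 : 0 < r := hposIoo r hr
    have hmem : Set.Icc R1 R2 ∈ nhds r := Icc_mem_nhds hr.1 hr.2
    have hda : DifferentiableAt ℝ φh r :=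
      ((hφh.differentiableOn one_ne_zero) r (Set.Ioo_subset_Icc_self hr)).differentiableAt hmem
    have heq := heq1 r (Set.Ioo_subset_Icc_self hr)
    have hρs : 0 < ρstar * r ^ α := mul_pos hρstar (Real.rpow_pos_of_pos hr0 α)
    have hAC : ((c1 * (ρstar * r ^ α) : ℝ) : ℂ) ≠ 0 := by
      exact_mod_cast mul_ne_zero hc1.ne' hρs.ne'
    have hreal : (c1 * (ρstar * r ^ α)) * (-(1 + α) / r)
        = -((1 + α) * (c1 / r) * (ρstar * r ^ α)) := by
      field_simp
    have hd : deriv φh r = ((-(1 + α) / r : ℝ) : ℂ) * φh r := by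
      refine mul_left_cancel₀ hAC ?_
      have hkey : ((c1 * (ρstar * r ^ α) : ℝ) : ℂ) * (((-(1 + α) / r : ℝ) : ℂ) * φh r)
          = ((-((1 + α) * (c1 / r) * (ρstar * r ^ α)) : ℝ) : ℂ) * φh r := by
        rw [← mul_assoc, ← Complex.ofReal_mul, hreal]
      rw [hkey, Complex.ofReal_neg]
      linear_combination heq
    have := hda.hasDerivAt
    rw [hd] at this
    rwa [Complex.real_smul]
  ------------------------------------------------------------------
  -- Part 1: ρh ≡ 0
  ------------------------------------------------------------------
  set F : ℝ → ℂ := fun r => (r ^ (-α) : ℝ) • ρh r with hF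
  have hF0 : ∀ r ∈ Set.Ioo R1 R2, HasDerivAt F 0 r := by
    intro r hr
    have hr0 : 0 < r := hposIoo r hr
    have hp : HasDerivAt (fun x : ℝ => x ^ (-α)) (-α * r ^ (-α - 1)) r :=
      Real.hasDerivAt_rpow_const (Or.inl hr0.ne')
    have := hp.smul (hρd r hr)
    have hzero : (r ^ (-α) : ℝ) • ((α / r : ℝ) • ρh r) + (-α * r ^ (-α - 1)) • ρh r = 0 := by
      rw [smul_smul, ← add_smul]
      have hsub : r ^ (-α - 1) = r ^ (-α) / r := Real.rpow_sub_one hr0.ne' _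
      have : r ^ (-α) * (α / r) + -α * r ^ (-α - 1) = 0 := by
        rw [hsub]; field_simp; ring
      rw [this, zero_smul]
    rwa [hzero] at this
  -- F is constant on the open interval; call the constant c0
  set m : ℝ := (R1 + R2) / 2 with hm
  have hmIoo : m ∈ Set.Ioo R1 R2 := ⟨by rw [hm]; linarith, by rw [hm]; linarith⟩
  set c0 : ℂ := F m with hc0
  have hFc : ∀ x ∈ Set.Ioo R1 R2, F x = c0 :=
    fun x hx => const_of_hasDerivAt_zero_Ioo hF0 x hx m hmIoo
  -- hence ρh r = r^α • c0 on Ioo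
  have hρrep : ∀ r ∈ Set.Ioo R1 R2, ρh r = (r ^ α : ℝ) • c0 := by
    intro r hr
    have hr0 : 0 < r := hposIoo r hr
    have := hFc r hr
    have h1 : (r ^ α : ℝ) • F r = ρh r := by
      rw [hF]
      simp only [smul_smul]
      rw [← Real.rpow_add hr0]
      simp
    rw [← h1, this]
  -- extend to the closed interval by continuity
  have hρrep' : ∀ r ∈ Set.Icc R1 R2, ρh r = (r ^ α : ℝ) • c0 := by
    have hcont : ContinuousOn (fun r : ℝ => ρh r - (r ^ α : ℝ) • c0) (Set.Icc R1 R2) := by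
      refine (hρh.continuousOn).sub (ContinuousOn.smul (f := fun r : ℝ => r ^ α) (g := fun _ => c0) ?_ continuousOn_const)
      exact fun r hr => (Real.continuousAt_rpow_const r α
        (Or.inl (hposIcc r hr).ne')).continuousWithinAt
    have := eqConst_Icc_of_eqConst_Ioo hR12 hcont (c := 0)
      (fun x hx => by rw [hρrep x hx, sub_self])
    intro r hr
    have h := this r hr
    exact sub_eq_zero.mp h
  -- use the mass condition to get c0 = 0
  have hIpos : (0 : ℝ) < ∫ r in R1..R2, r ^ (α + 1) := by
    refine intervalIntegral.intervalIntegral_pos_of_pos_on ?_ ?_ hR12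
    · apply ContinuousOn.intervalIntegrable
      intro r hr
      rw [Set.uIcc_of_le hR12.le] at hr
      exact (Real.continuousAt_rpow_const r _ (Or.inl (hposIcc r hr).ne')).continuousWithinAt
    · intro x hx
      exact Real.rpow_pos_of_pos (hposIoo x hx) _
  have hint : ∫ r in R1..R2, ρh r * (r : ℂ)
      = ((∫ r in R1..R2, r ^ (α + 1) : ℝ) : ℂ) * c0 := by
    have hEq : Set.EqOn (fun r : ℝ => ρh r * (r : ℂ))
        (fun r : ℝ => ((r ^ (α + 1) : ℝ) : ℂ) * c0) (Set.uIcc R1 R2) := by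
      intro r hr
      rw [Set.uIcc_of_le hR12.le] at hr
      have hr0 : 0 < r := hposIcc r hr
      simp only
      rw [hρrep' r hr, Complex.real_smul, Real.rpow_add_one hr0.ne']
      push_cast
      ring
    rw [intervalIntegral.integral_congr hEq, intervalIntegral.integral_mul_const,
      intervalIntegral.integral_ofReal]
  have hc0zero : c0 = 0 := by
    rw [hint] at hmass
    rcases mul_eq_zero.mp hmass with h | h
    · exact absurd h (by exact_mod_cast hIpos.ne')
    · exact h
  have hρzero : ∀ r ∈ Set.Icc R1 R2, ρh r = 0 := by
    intro r hr
    rw [hρrep' r hr, hc0zero, smul_zero]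
  ------------------------------------------------------------------
  -- Part 2: φh ≡ 0
  ------------------------------------------------------------------
  set G : ℝ → ℂ := fun r => (r ^ (1 + α) : ℝ) • φh r with hG
  have hG0 : ∀ r ∈ Set.Ioo R1 R2, HasDerivAt G 0 r := by
    intro r hr
    have hr0 : 0 < r := hposIoo r hr
    have hp : HasDerivAt (fun x : ℝ => x ^ (1 + α)) ((1 + α) * r ^ (1 + α - 1)) r :=
      Real.hasDerivAt_rpow_const (Or.inl hr0.ne')
    have := hp.smul (hφd r hr)
    have hzero : (r ^ (1 + α) : ℝ) • ((-(1 + α) / r : ℝ) • φh r)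
        + ((1 + α) * r ^ (1 + α - 1)) • φh r = 0 := by
      rw [smul_smul, ← add_smul]
      have hsub : r ^ (1 + α - 1) = r ^ (1 + α) / r := Real.rpow_sub_one hr0.ne' _
      have : r ^ (1 + α) * (-(1 + α) / r) + (1 + α) * r ^ (1 + α - 1) = 0 := by
        rw [hsub]; field_simp; ring
      rw [this, zero_smul]
    rwa [hzero] at this
  have hGcont : ContinuousOn G (Set.Icc R1 R2) := by
    refine ContinuousOn.smul (f := fun r : ℝ => r ^ (1 + α)) (g := φh) ?_ hφh.continuousOn
    exact fun r hr => (Real.continuousAt_rpow_const r _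
      (Or.inl (hposIcc r hr).ne')).continuousWithinAt
  set cG : ℂ := G m with hcG
  have hGc : ∀ x ∈ Set.Ioo R1 R2, G x = cG :=
    fun x hx => const_of_hasDerivAt_zero_Ioo hG0 x hx m hmIoo
  have hGc' : ∀ x ∈ Set.Icc R1 R2, G x = cG :=
    eqConst_Icc_of_eqConst_Ioo hR12 hGcont hGc
  have hcGzero : cG = 0 := by
    have h := hGc' R1 (Set.left_mem_Icc.mpr hR12.le)
    rw [hG] at h
    simp only [hbc, smul_zero] at h
    exact h.symm
  have hφzero : ∀ r ∈ Set.Icc R1 R2, φh r = 0 := by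
    intro r hr
    have h := hGc' r hr
    rw [hcGzero, hG] at h
    simp only at h
    rcases smul_eq_zero.mp h with h' | h'
    · exact absurd h' (Real.rpow_pos_of_pos (hposIcc r hr) _).ne'
    · exact h'
  exact fun r hr => ⟨hρzero r hr, hφzero r hr⟩
end
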